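/- There exists a constant C > 0, depending only on γ, such that for all R > 0, ρ > 0 and u ∈ ℝ: |η^{ψ_R}(ρ, u)| ≤ C R ρ(|u| + ρ^θ) and |q^{ψ_R}(ρ, u)| ≤ C R ρ(|u| + ρ^θ)². -/

import Mathlib

open Real MeasureTheory

/-- `θ = (γ − 1)/2`. -/
noncomputable def thetaExp (γ : ℝ) : ℝ := (γ - 1) / 2

/-- `λ = (3 − γ)/(2(γ − 1))`. -/
noncomputable def lamExp (γ : ℝ) : ℝ := (3 - γ) / (2 * (γ - 1))

/-- The weak entropy of the isentropic Euler system with polytropic pressure, generated by `ψ`: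
`η^ψ(ρ, u) = ρ ∫_{−1}^{1} ψ(u + ρ^θ s)(1 − s²)^λ ds`. -/
noncomputable def entropy (γ : ℝ) (ψ : ℝ → ℝ) (ρ u : ℝ) : ℝ :=
  ρ * ∫ s in (-1:ℝ)..1, ψ (u + ρ ^ thetaExp γ * s) * (1 - s ^ 2) ^ lamExp γ

/-- The weak entropy flux generated by `ψ`:
`q^ψ(ρ, u) = ρ ∫_{−1}^{1} (u + θρ^θ s) ψ(u + ρ^θ s)(1 − s²)^λ ds`. -/
noncomputable def entropyFlux (γ : ℝ) (ψ : ℝ → ℝ) (ρ u : ℝ) : ℝ :=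
  ρ * ∫ s in (-1:ℝ)..1,
    (u + thetaExp γ * ρ ^ thetaExp γ * s) * ψ (u + ρ ^ thetaExp γ * s) * (1 - s ^ 2) ^ lamExp γ

/-- The truncated second derivative: `h_R(w) = 1` if `|w| ≤ R`, `(2R − |w|)/R` if
`R ≤ |w| ≤ 2R`, and `0` if `|w| ≥ 2R`. -/
noncomputable def hTrunc (R w : ℝ) : ℝ :=
  if |w| ≤ R then 1 else if |w| ≤ 2 * R then (2 * R - |w|) / R else 0

/-- The truncated quadratic generating function `ψ_R(s) = ∫₀^s ∫₀^y h_R(w) dw dy`. -/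
noncomputable def psiR (R s : ℝ) : ℝ := ∫ y in (0:ℝ)..s, ∫ w in (0:ℝ)..y, hTrunc R w

lemma hTrunc_nonneg {R : ℝ} (hR : 0 < R) (w : ℝ) : 0 ≤ hTrunc R w := by
  unfold hTrunc
  split_ifs with h1 h2
  · norm_num
  · apply div_nonneg _ hR.le; linarith
  · exact le_rfl

lemma hTrunc_le_one {R : ℝ} (hR : 0 < R) (w : ℝ) : hTrunc R w ≤ 1 := by
  unfold hTrunc
  split_ifs with h1 h2
  · exact le_rfl
  · rw [div_le_one hR]; push_neg at h1; linarith
  · norm_num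

lemma abs_hTrunc_le {R : ℝ} (hR : 0 < R) (w : ℝ) : |hTrunc R w| ≤ 1 :=
  abs_le.2 ⟨by linarith [hTrunc_nonneg hR w], hTrunc_le_one hR w⟩

lemma hTrunc_eq_zero {R w : ℝ} (hR : 0 < R) (h : 2 * R ≤ |w|) : hTrunc R w = 0 := by
  unfold hTrunc
  split_ifs with h1 h2
  · linarith
  · have : |w| = 2 * R := le_antisymm h2 h
    rw [this]; ring
  · rfl

lemma hTrunc_measurable (R : ℝ) : Measurable (hTrunc R) := by
  unfold hTrunc
  refine Measurable.ite ?_ measurable_const (Measurable.ite ?_ ?_ measurable_const)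
  · exact measurableSet_le measurable_abs measurable_const
  · exact measurableSet_le measurable_abs measurable_const
  · exact (measurable_const.sub measurable_abs).div_const R

lemma hTrunc_intervalIntegrable {R : ℝ} (hR : 0 < R) (a b : ℝ) :
    IntervalIntegrable (hTrunc R) volume a b := by
  apply IntervalIntegrable.mono_fun' (g := fun _ => (1:ℝ)) intervalIntegrable_const
  · exact ((hTrunc_measurable R).aestronglyMeasurable).restrict
  · exact Filter.Eventually.of_forall fun w => by simpa using abs_hTrunc_le hR w

lemma inner_le {R : ℝ} (hR : 0 < R) (y : ℝ) : |∫ w in (0:ℝ)..y, hTrunc R w| ≤ 2 * R := by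
  have base : ∀ z : ℝ, |z| ≤ 2 * R → |∫ w in (0:ℝ)..z, hTrunc R w| ≤ 2 * R := by
    intro z hz
    have h1 : ‖∫ w in (0:ℝ)..z, hTrunc R w‖ ≤ 1 * |z - 0| :=
      intervalIntegral.norm_integral_le_of_norm_le_const
        (fun x _ => by simpa using abs_hTrunc_le hR x)
    rw [Real.norm_eq_abs] at h1
    calc |∫ w in (0:ℝ)..z, hTrunc R w| ≤ 1 * |z - 0| := h1
      _ = |z| := by rw [sub_zero, one_mul]
      _ ≤ 2 * R := hz
  rcases le_or_gt |y| (2 * R) with h | h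
  · exact base y h
  rcases le_or_gt 0 y with hy | hy
  · have hy2 : 2 * R < y := by rwa [abs_of_nonneg hy] at h
    have split : (∫ w in (0:ℝ)..y, hTrunc R w)
        = (∫ w in (0:ℝ)..(2*R), hTrunc R w) + ∫ w in (2*R)..y, hTrunc R w :=
      (intervalIntegral.integral_add_adjacent_intervals
        (hTrunc_intervalIntegrable hR _ _) (hTrunc_intervalIntegrable hR _ _)).symm
    have hzero : (∫ w in (2*R)..y, hTrunc R w) = 0 := by
      rw [show (0:ℝ) = ∫ w in (2*R)..y, (0:ℝ) by simp]
      apply intervalIntegral.integral_congr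
      intro w hw
      rw [Set.uIcc_of_le hy2.le] at hw
      exact hTrunc_eq_zero hR (le_abs.2 (Or.inl hw.1))
    rw [split, hzero, add_zero]
    exact base _ (by rw [abs_of_nonneg (by linarith)])
  · have hy2 : y < -(2 * R) := by rw [abs_of_neg hy] at h; linarith
    have split : (∫ w in (0:ℝ)..y, hTrunc R w)
        = (∫ w in (0:ℝ)..(-(2*R)), hTrunc R w) + ∫ w in (-(2*R))..y, hTrunc R w :=
      (intervalIntegral.integral_add_adjacent_intervals
        (hTrunc_intervalIntegrable hR _ _) (hTrunc_intervalIntegrable hR _ _)).symm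
    have hzero : (∫ w in (-(2*R))..y, hTrunc R w) = 0 := by
      rw [show (0:ℝ) = ∫ w in (-(2*R))..y, (0:ℝ) by simp]
      apply intervalIntegral.integral_congr
      intro w hw
      rw [Set.uIcc_of_ge hy2.le] at hw
      exact hTrunc_eq_zero hR (le_abs.2 (Or.inr (by linarith [hw.2])))
    rw [split, hzero, add_zero]
    exact base _ (by rw [abs_of_nonpos (by linarith)]; linarith)

lemma abs_psiR_le {R : ℝ} (hR : 0 < R) (s : ℝ) : |psiR R s| ≤ 2 * R * |s| := by
  unfold psiR
  have h1 : ‖∫ y in (0:ℝ)..s, ∫ w in (0:ℝ)..y, hTrunc R w‖ ≤ (2*R) * |s - 0| :=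
    intervalIntegral.norm_integral_le_of_norm_le_const
      (fun y _ => by simpa using inner_le hR y)
  rw [Real.norm_eq_abs, sub_zero] at h1
  exact h1

lemma G_integrable {lam : ℝ} (h : -1 < lam) :
    IntervalIntegrable (fun s : ℝ => (1-s)^lam + (1+s)^lam + 1) volume (-1) 1 := by
  apply IntervalIntegrable.add
  apply IntervalIntegrable.add
  · have h1 := (intervalIntegral.intervalIntegrable_rpow' (a := 0) (b := 2) h).comp_sub_left 1
    norm_num at h1
    exact h1.symm
  · have h2 := (intervalIntegral.intervalIntegrable_rpow' (a := 0) (b := 2) h).comp_add_left 1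
    norm_num at h2
    exact h2
  · exact intervalIntegrable_const

lemma one_sub_sq_rpow_le {lam : ℝ} (s : ℝ) (hs : s ∈ Set.Icc (-1:ℝ) 1) :
    (1 - s^2)^lam ≤ (1-s)^lam + (1+s)^lam + 1 := by
  obtain ⟨hl1, hl2⟩ := hs
  have h1 : (0:ℝ) ≤ 1 - s := by linarith
  have h2 : (0:ℝ) ≤ 1 + s := by linarith
  have h0 : (0:ℝ) ≤ 1 - s^2 := by nlinarith
  have g1 : 0 ≤ (1-s)^lam := Real.rpow_nonneg h1 _
  have g2 : 0 ≤ (1+s)^lam := Real.rpow_nonneg h2 _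
  rcases le_or_gt 0 lam with hl | hl
  · have : (1 - s^2)^lam ≤ 1 := Real.rpow_le_one h0 (by nlinarith) hl
    linarith
  · rcases le_or_gt 0 s with hsz | hsz
    · have key : (1 - s^2)^lam ≤ (1-s)^lam := by
        rcases eq_or_lt_of_le h1 with he | hp
        · have hs1 : s = 1 := by linarith
          subst hs1
          norm_num
        · exact Real.rpow_le_rpow_of_nonpos hp (by nlinarith) hl.le
      linarith
    · have key : (1 - s^2)^lam ≤ (1+s)^lam := by
        rcases eq_or_lt_of_le h2 with he | hp
        · have hs1 : s = -1 := by linarith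
          subst hs1
          norm_num
        · exact Real.rpow_le_rpow_of_nonpos hp (by nlinarith) hl.le
      linarith

/-- There is a constant `C > 0`, depending only on `γ`, such that for all `R > 0`, `ρ > 0`
and `u ∈ ℝ`: `|η^{ψ_R}(ρ,u)| ≤ C R ρ(|u| + ρ^θ)` and `|q^{ψ_R}(ρ,u)| ≤ C R ρ(|u| + ρ^θ)²`. -/
theorem entropy_psiR_bounds (γ : ℝ) (hγ : 1 < γ) :
    ∃ C : ℝ, 0 < C ∧ ∀ R : ℝ, 0 < R → ∀ ρ : ℝ, 0 < ρ → ∀ u : ℝ,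
      |entropy γ (psiR R) ρ u| ≤ C * R * ρ * (|u| + ρ ^ thetaExp γ) ∧
      |entropyFlux γ (psiR R) ρ u| ≤ C * R * ρ * (|u| + ρ ^ thetaExp γ) ^ 2 := by
  have hθ : 0 < thetaExp γ := by unfold thetaExp; linarith
  have hlam : -1 < lamExp γ := by
    unfold lamExp
    rw [lt_div_iff₀ (by linarith : (0:ℝ) < 2*(γ-1))]
    linarith
  set lam := lamExp γ with hlamdef
  set θ := thetaExp γ with hθdef
  set G : ℝ → ℝ := fun s => (1-s)^lam + (1+s)^lam + 1 with hG
  have hGint : IntervalIntegrable G volume (-1) 1 := G_integrable hlam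
  set I := ∫ s in (-1:ℝ)..1, G s with hIdef
  have hI0 : 0 ≤ I := by
    apply intervalIntegral.integral_nonneg (by norm_num)
    intro s hs
    have g1 : 0 ≤ (1-s)^lam := Real.rpow_nonneg (by linarith [hs.2]) _
    have g2 : 0 ≤ (1+s)^lam := Real.rpow_nonneg (by linarith [hs.1]) _
    simp only [hG]; linarith
  refine ⟨2*(θ+1)*(I+1), by nlinarith, fun R hR ρ hρ u => ?_⟩
  have hρθ : 0 < ρ ^ θ := Real.rpow_pos_of_pos hρ θ
  set M := |u| + ρ ^ θ with hM
  have hMpos : 0 < M := by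
    have := abs_nonneg u
    simp only [hM]; linarith
  have habs_arg : ∀ s ∈ Set.Icc (-1:ℝ) 1, |u + ρ^θ * s| ≤ M := by
    intro s hs
    have hsabs : |s| ≤ 1 := abs_le.2 ⟨hs.1, hs.2⟩
    calc |u + ρ^θ*s| ≤ |u| + |ρ^θ*s| := abs_add_le _ _
      _ = |u| + ρ^θ * |s| := by rw [abs_mul, abs_of_pos hρθ]
      _ ≤ M := by simp only [hM]; nlinarith
  have hsub : Set.uIoc (-1:ℝ) 1 ⊆ Set.Icc (-1:ℝ) 1 := by
    rw [Set.uIoc_of_le (by norm_num : (-1:ℝ) ≤ 1)]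
    exact Set.Ioc_subset_Icc_self
  constructor
  · -- entropy bound
    have key : |∫ s in (-1:ℝ)..1, psiR R (u + ρ^θ*s) * (1-s^2)^lam| ≤ (2*R*M) * I := by
      have hpt : ∀ᵐ t ∂(volume.restrict (Set.uIoc (-1:ℝ) 1)),
          ‖psiR R (u + ρ^θ*t) * (1-t^2)^lam‖ ≤ (2*R*M) * G t := by
        filter_upwards [MeasureTheory.ae_restrict_mem measurableSet_uIoc] with t ht
        have ht' := hsub ht
        have h0 : (0:ℝ) ≤ 1 - t^2 := by nlinarith [ht'.1, ht'.2]
        rw [Real.norm_eq_abs, abs_mul, abs_of_nonneg (Real.rpow_nonneg h0 lam)]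
        have hψ : |psiR R (u + ρ^θ*t)| ≤ 2*R*M := by
          calc |psiR R (u + ρ^θ*t)| ≤ 2*R*|u+ρ^θ*t| := abs_psiR_le hR _
            _ ≤ 2*R*M := by nlinarith [habs_arg t ht', hR.le]
        have hGb : (1-t^2)^lam ≤ G t := one_sub_sq_rpow_le t ht'
        exact mul_le_mul hψ hGb (Real.rpow_nonneg h0 lam)
          (by nlinarith [hR.le, hMpos.le])
      have hbnd : IntervalIntegrable (fun t => (2*R*M) * G t) volume (-1) 1 :=
        hGint.const_mul _
      have hmain := intervalIntegral.norm_integral_le_abs_of_norm_le hpt hbnd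
      rw [Real.norm_eq_abs] at hmain
      calc |∫ s in (-1:ℝ)..1, psiR R (u + ρ^θ*s) * (1-s^2)^lam|
          ≤ |∫ t in (-1:ℝ)..1, (2*R*M) * G t| := hmain
        _ = (2*R*M) * I := by
            rw [intervalIntegral.integral_const_mul, ← hIdef, abs_mul, abs_of_nonneg hI0,
              abs_of_nonneg (by nlinarith [hR.le, hMpos.le] : (0:ℝ) ≤ 2*R*M)]
    have heq : |entropy γ (psiR R) ρ u| =
        ρ * |∫ s in (-1:ℝ)..1, psiR R (u + ρ^θ*s) * (1-s^2)^lam| := by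
      rw [entropy, abs_mul, abs_of_pos hρ]
    rw [heq]
    calc ρ * |∫ s in (-1:ℝ)..1, psiR R (u + ρ^θ*s) * (1-s^2)^lam|
        ≤ ρ * ((2*R*M) * I) := by
          exact mul_le_mul_of_nonneg_left key hρ.le
      _ ≤ 2*(θ+1)*(I+1) * R * ρ * M := by
          nlinarith [mul_pos (mul_pos hR hρ) hMpos, hθ, hI0,
            mul_nonneg (mul_nonneg (mul_pos hR hρ).le hMpos.le) hI0,
            mul_nonneg (mul_nonneg (mul_pos hR hρ).le hMpos.le) hθ.le,
            mul_nonneg (mul_nonneg (mul_nonneg (mul_pos hR hρ).le hMpos.le) hI0) hθ.le]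
  · -- flux bound
    have key : |∫ s in (-1:ℝ)..1,
        (u + θ * ρ^θ * s) * psiR R (u + ρ^θ*s) * (1-s^2)^lam| ≤ ((θ+1)*M*(2*R*M)) * I := by
      have hpt : ∀ᵐ t ∂(volume.restrict (Set.uIoc (-1:ℝ) 1)),
          ‖(u + θ * ρ^θ * t) * psiR R (u + ρ^θ*t) * (1-t^2)^lam‖
            ≤ ((θ+1)*M*(2*R*M)) * G t := by
        filter_upwards [MeasureTheory.ae_restrict_mem measurableSet_uIoc] with t ht
        have ht' := hsub ht
        have htabs : |t| ≤ 1 := abs_le.2 ⟨ht'.1, ht'.2⟩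
        have h0 : (0:ℝ) ≤ 1 - t^2 := by nlinarith [ht'.1, ht'.2]
        rw [Real.norm_eq_abs, abs_mul, abs_of_nonneg (Real.rpow_nonneg h0 lam), abs_mul]
        have hψ : |psiR R (u + ρ^θ*t)| ≤ 2*R*M := by
          calc |psiR R (u + ρ^θ*t)| ≤ 2*R*|u+ρ^θ*t| := abs_psiR_le hR _
            _ ≤ 2*R*M := by nlinarith [habs_arg t ht', hR.le]
        have hfac : |u + θ * ρ^θ * t| ≤ (θ+1)*M := by
          calc |u + θ * ρ^θ * t| ≤ |u| + |θ * ρ^θ * t| := abs_add_le _ _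
            _ = |u| + θ * ρ^θ * |t| := by
                rw [abs_mul, abs_mul, abs_of_pos hθ, abs_of_pos hρθ]
            _ ≤ (θ+1)*M := by
                simp only [hM]; nlinarith [abs_nonneg u, mul_nonneg (mul_nonneg hθ.le hρθ.le) (by linarith [htabs] : (0:ℝ) ≤ 1 - |t|)]
        have hGb : (1-t^2)^lam ≤ G t := one_sub_sq_rpow_le t ht'
        have hprod : |u + θ * ρ^θ * t| * |psiR R (u + ρ^θ*t)| ≤ (θ+1)*M*(2*R*M) := by
          apply mul_le_mul hfac hψ (abs_nonneg _)
          nlinarith [hθ.le, hMpos.le]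
        exact mul_le_mul hprod hGb (Real.rpow_nonneg h0 lam)
          (mul_nonneg (mul_nonneg (by linarith : (0:ℝ) ≤ θ+1) hMpos.le) (mul_nonneg (by linarith : (0:ℝ) ≤ 2*R) hMpos.le))
      have hbnd : IntervalIntegrable (fun t => ((θ+1)*M*(2*R*M)) * G t) volume (-1) 1 :=
        hGint.const_mul _
      have hmain := intervalIntegral.norm_integral_le_abs_of_norm_le hpt hbnd
      rw [Real.norm_eq_abs] at hmain
      calc |∫ s in (-1:ℝ)..1, (u + θ * ρ^θ * s) * psiR R (u + ρ^θ*s) * (1-s^2)^lam|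
          ≤ |∫ t in (-1:ℝ)..1, ((θ+1)*M*(2*R*M)) * G t| := hmain
        _ = ((θ+1)*M*(2*R*M)) * I := by
            rw [intervalIntegral.integral_const_mul, ← hIdef, abs_mul, abs_of_nonneg hI0,
              abs_of_nonneg (mul_nonneg (mul_nonneg (by linarith : (0:ℝ) ≤ θ+1) hMpos.le) (mul_nonneg (by linarith : (0:ℝ) ≤ 2*R) hMpos.le))]
    have heq : |entropyFlux γ (psiR R) ρ u| =
        ρ * |∫ s in (-1:ℝ)..1, (u + θ * ρ^θ * s) * psiR R (u + ρ^θ*s) * (1-s^2)^lam| := by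
      rw [entropyFlux, abs_mul, abs_of_pos hρ]
    rw [heq]
    calc ρ * |∫ s in (-1:ℝ)..1, (u + θ * ρ^θ * s) * psiR R (u + ρ^θ*s) * (1-s^2)^lam|
        ≤ ρ * (((θ+1)*M*(2*R*M)) * I) := mul_le_mul_of_nonneg_left key hρ.le
      _ ≤ 2*(θ+1)*(I+1) * R * ρ * M^2 := by
          nlinarith [mul_pos (mul_pos hR hρ) (mul_pos hMpos hMpos), hθ, hI0,
            mul_nonneg (mul_nonneg (mul_nonneg (mul_pos hR hρ).le (mul_pos hMpos hMpos).le) hθ.le) hI0,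
            mul_nonneg (mul_nonneg (mul_pos hR hρ).le (mul_pos hMpos hMpos).le) hθ.le]
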